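/- Let H ≠ ℕ be a numerical semigroup with Frobenius number f = f(H), and set Ω(H) = {f − x + h : x ∈ QF(H), h ∈ H} ⊆ ℕ. Then there exists n ≥ 1 such that the n-fold sumset Ω(H) + Ω(H) + ⋯ + Ω(H) (n summands) equals ℕ if and only if f − 1 ∈ QF(H). -/
import Mathlib


set_option synthInstance.maxHeartbeats 400000
set_option maxHeartbeats 1000000

open Pointwise

/-- The Frobenius number of a numerical semigroup `H ⊆ ℕ`: the largest natural number
not in `H` (meaningful when `H ≠ ℕ` and the complement of `H` is finite). -/
noncomputable def frobeniusNumber (H : AddSubmonoid ℕ) : ℕ :=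
  sSup {x : ℕ | x ∉ H}

/-- The set of quasi-Frobenius numbers of a numerical semigroup `H`:
`QF(H) = {x ∈ ℕ \ H : x + h ∈ H for every nonzero h ∈ H}`. -/
def QF (H : AddSubmonoid ℕ) : Set ℕ :=
  {x | x ∉ H ∧ ∀ h ∈ H, h ≠ 0 → x + h ∈ H}

/-- `Ω(H) = {f − x + h : x ∈ QF(H), h ∈ H} ⊆ ℕ`, where `f` is the Frobenius number. -/
noncomputable def OmegaSet (H : AddSubmonoid ℕ) : Set ℕ :=
  {m | ∃ x ∈ QF H, ∃ h ∈ H, m = frobeniusNumber H - x + h}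

/-- The `n`-fold pointwise sumset `S + S + ⋯ + S` (`n` summands) of a set `S ⊆ ℕ`. -/
def iterSumset (S : Set ℕ) : ℕ → Set ℕ
  | 0 => {0}
  | n + 1 => S + iterSumset S n

/-- Let `H ≠ ℕ` be a numerical semigroup with Frobenius number `f`,
and `Ω(H) = {f − x + h : x ∈ QF(H), h ∈ H}`. Then some `n`-fold sumset
`Ω(H) + ⋯ + Ω(H)` (`n ≥ 1` summands) equals `ℕ` if and only if `f − 1 ∈ QF(H)`. -/
lemma aux_one_notMem (H : AddSubmonoid ℕ) (hne : H ≠ ⊤) : (1 : ℕ) ∉ H := by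
  intro h1
  apply hne
  ext n
  simp only [AddSubmonoid.mem_top, iff_true]
  have := H.nsmul_mem h1 n
  simpa using this

lemma aux_two_le (H : AddSubmonoid ℕ) (hne : H ≠ ⊤) {h : ℕ}
    (hh : h ∈ H) (hh0 : h ≠ 0) : 2 ≤ h := by
  rcases h with _ | _ | h
  · omega
  · exact absurd hh (aux_one_notMem H hne)
  · omega

lemma aux_gap_le (H : AddSubmonoid ℕ) (hfin : ((H : Set ℕ)ᶜ).Finite)
    {x : ℕ} (hx : x ∉ H) : x ≤ frobeniusNumber H :=
  le_csSup hfin.bddAbove hx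

lemma aux_mem_of_gt (H : AddSubmonoid ℕ) (hfin : ((H : Set ℕ)ᶜ).Finite)
    {m : ℕ} (hm : frobeniusNumber H < m) : m ∈ H := by
  by_contra h
  exact absurd (aux_gap_le H hfin h) (not_le.2 hm)

lemma aux_f_notMem (H : AddSubmonoid ℕ) (hfin : ((H : Set ℕ)ᶜ).Finite)
    (hne : H ≠ ⊤) : frobeniusNumber H ∉ H := by
  have hnonempty : {x : ℕ | x ∉ H}.Nonempty := by
    by_contra h
    apply hne
    ext n
    simp only [AddSubmonoid.mem_top, iff_true]
    by_contra hn
    exact h ⟨n, hn⟩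
  exact Nat.sSup_mem hnonempty hfin.bddAbove

lemma aux_f_pos (H : AddSubmonoid ℕ) (hfin : ((H : Set ℕ)ᶜ).Finite)
    (hne : H ≠ ⊤) : 1 ≤ frobeniusNumber H := by
  have := aux_f_notMem H hfin hne
  rcases Nat.eq_zero_or_pos (frobeniusNumber H) with h | h
  · exact absurd (h ▸ H.zero_mem) this
  · exact h

lemma aux_f_mem_QF (H : AddSubmonoid ℕ) (hfin : ((H : Set ℕ)ᶜ).Finite)
    (hne : H ≠ ⊤) : frobeniusNumber H ∈ QF H := by
  refine ⟨aux_f_notMem H hfin hne, fun h hh hh0 => ?_⟩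
  exact aux_mem_of_gt H hfin (by omega)

lemma aux_zero_mem_Omega (H : AddSubmonoid ℕ) (hfin : ((H : Set ℕ)ᶜ).Finite)
    (hne : H ≠ ⊤) : 0 ∈ OmegaSet H :=
  ⟨frobeniusNumber H, aux_f_mem_QF H hfin hne, 0, H.zero_mem, by simp⟩

lemma aux_gt_mem_Omega (H : AddSubmonoid ℕ) (hfin : ((H : Set ℕ)ᶜ).Finite)
    (hne : H ≠ ⊤) {m : ℕ} (hm : frobeniusNumber H < m) : m ∈ OmegaSet H :=
  ⟨frobeniusNumber H, aux_f_mem_QF H hfin hne, m, aux_mem_of_gt H hfin hm, by simp⟩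

lemma aux_zero_mem_iter (S : Set ℕ) (h0 : 0 ∈ S) : ∀ n, 0 ∈ iterSumset S n := by
  intro n
  induction n with
  | zero => simp [iterSumset]
  | succ n ih => exact ⟨0, h0, 0, ih, rfl⟩

lemma aux_le_mem_iter (S : Set ℕ) (h0 : 0 ∈ S) (h1 : 1 ∈ S) :
    ∀ n m, m ≤ n → m ∈ iterSumset S n := by
  intro n
  induction n with
  | zero => intro m hm; simp [iterSumset]; omega
  | succ n ih =>
    intro m hm
    rcases Nat.eq_zero_or_pos m with h | h
    · subst h; exact aux_zero_mem_iter S h0 _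
    · exact ⟨1, h1, m - 1, ih (m-1) (by omega), (by omega : 1 + (m - 1) = m)⟩

theorem stmt9 (H : AddSubmonoid ℕ)
    (hfin : ((H : Set ℕ)ᶜ).Finite) (hne : H ≠ ⊤) :
    (∃ n : ℕ, 1 ≤ n ∧ iterSumset (OmegaSet H) n = Set.univ) ↔
      frobeniusNumber H - 1 ∈ QF H := by
  constructor
  · rintro ⟨n, hn1, hn⟩
    by_contra hQF
    have h1 : (1 : ℕ) ∉ OmegaSet H := by
      rintro ⟨x, hx, h, hh, heq⟩
      have hxle : x ≤ frobeniusNumber H := aux_gap_le H hfin hx.1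
      rcases Nat.eq_zero_or_pos h with h0 | h0
      · subst h0
        have : x = frobeniusNumber H - 1 := by omega
        exact hQF (this ▸ hx)
      · have := aux_two_le H hne hh (by omega)
        omega
    have key : ∀ k, (1 : ℕ) ∉ iterSumset (OmegaSet H) k := by
      intro k
      induction k with
      | zero => simp [iterSumset]
      | succ k ih =>
        rintro ⟨a, ha, b, hb, hab⟩
        have hab' : a + b = 1 := hab
        rcases (by omega : a = 0 ∧ b = 1 ∨ a = 1) with ⟨rfl, rfl⟩ | rfl
        · exact ih hb
        · exact h1 ha
    exact key n (hn ▸ Set.mem_univ 1)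
  · intro hQF
    have hfpos := aux_f_pos H hfin hne
    refine ⟨frobeniusNumber H, hfpos, ?_⟩
    ext m
    simp only [Set.mem_univ, iff_true]
    rcases le_or_gt m (frobeniusNumber H) with hm | hm
    · have h1mem : (1 : ℕ) ∈ OmegaSet H :=
        ⟨frobeniusNumber H - 1, hQF, 0, H.zero_mem, by omega⟩
      exact aux_le_mem_iter (OmegaSet H) (aux_zero_mem_Omega H hfin hne) h1mem
        (frobeniusNumber H) m hm
    · have hf1 : frobeniusNumber H = (frobeniusNumber H - 1) + 1 := by omega
      rw [hf1]
      exact ⟨m, aux_gt_mem_Omega H hfin hne hm, 0,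
        aux_zero_mem_iter (OmegaSet H) (aux_zero_mem_Omega H hfin hne) _,
        (by omega : m + 0 = m)⟩
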